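/- Let θ be inner and g ∈ L^∞(T) with ker A_g^θ ≠ {0}, and let n be the greatest natural number such that ker A_g^θ ⊆ zⁿH². Then (1/zⁿ)·ker A_g^θ is a nearly S*-invariant subspace of H². -/

import Mathlib

open MeasureTheory Complex Real
open scoped ENNReal ComplexConjugate

noncomputable section

namespace Paper

instance : Fact (0 < 2 * Real.pi) := ⟨by positivity⟩

abbrev Tc : Type := AddCircle (2 * Real.pi)
abbrev μ0 : MeasureTheory.Measure Tc := AddCircle.haarAddCircle
abbrev L2 : Type := MeasureTheory.Lp ℂ 2 μ0

def coeffCLM (n : ℤ) : L2 →L[ℂ] ℂ :=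
  LinearMap.mkContinuous
    { toFun := fun f => fourierBasis.repr f n
      map_add' := fun f g => by simp
      map_smul' := fun c f => by simp }
    1
    (fun f => by
      have h := lp.norm_apply_le_norm (p := 2) (by norm_num) (fourierBasis.repr f) n
      simpa using h)

def cf (f : L2) (n : ℤ) : ℂ := coeffCLM n f

/-- The subspace of `L²(𝕋)` of functions whose Fourier coefficients of index `< k` vanish.
Thus `coeffGE 0 = H²` and `coeffGE k = zᵏH²` for `k ≥ 0`. -/
def coeffGE (k : ℤ) : Submodule ℂ L2 :=
  ⨅ (n : ℤ) (_ : n < k), LinearMap.ker (coeffCLM n : L2 →ₗ[ℂ] ℂ)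

/-- The subspace of `L²(𝕋)` of functions whose Fourier coefficients of index `≥ k` vanish.
Thus `coeffLT 0 = conj (H²₀) = (H²)^⊥`. -/
def coeffLT (k : ℤ) : Submodule ℂ L2 :=
  ⨅ (n : ℤ) (_ : k ≤ n), LinearMap.ker (coeffCLM n : L2 →ₗ[ℂ] ℂ)

/-- The Hardy space `H²` of the unit disc, viewed as a subspace of `L²(𝕋)`. -/
def H2 : Submodule ℂ L2 := coeffGE 0

lemma mem_coeffGE {k : ℤ} {f : L2} : f ∈ coeffGE k ↔ ∀ n < k, cf f n = 0 := by
  simp [coeffGE, cf, Submodule.mem_iInf, LinearMap.mem_ker]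

lemma isClosed_coeffGE (k : ℤ) : IsClosed ((coeffGE k : Submodule ℂ L2) : Set L2) := by
  have h : ((coeffGE k : Submodule ℂ L2) : Set L2)
      = ⋂ (n : ℤ) (_ : n < k), (LinearMap.ker (coeffCLM n : L2 →ₗ[ℂ] ℂ) : Set L2) := by
    ext f
    simp [coeffGE, Submodule.mem_iInf, Set.mem_iInter]
  rw [h]
  exact isClosed_iInter fun n => isClosed_iInter fun _ => ContinuousLinearMap.isClosed_ker (coeffCLM n)

end Paper
namespace Paper

open scoped Classical in
/-- Multiplication by an `L^∞` function, as a linear map on `L²(𝕋)` (defined to be `0` if the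
symbol is not essentially bounded). -/
def mulLM (g : Tc → ℂ) : L2 →ₗ[ℂ] L2 :=
  if hg : MemLp g ⊤ μ0 then
    { toFun := fun f => ((Lp.memLp f).smul (r := 2) hg).toLp (g • ⇑f)
      map_add' := fun f₁ f₂ => by
        apply Lp.ext
        filter_upwards [MemLp.coeFn_toLp ((Lp.memLp (f₁ + f₂)).smul (r := 2) hg),
          MemLp.coeFn_toLp ((Lp.memLp f₁).smul (r := 2) hg),
          MemLp.coeFn_toLp ((Lp.memLp f₂).smul (r := 2) hg),
          Lp.coeFn_add f₁ f₂,
          Lp.coeFn_add (((Lp.memLp f₁).smul (r := 2) hg).toLp (g • ⇑f₁))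
            (((Lp.memLp f₂).smul (r := 2) hg).toLp (g • ⇑f₂))] with x h0 h1 h2 h3 h4
        rw [h0, h4, Pi.add_apply, h1, h2]
        simp only [Pi.smul_apply', Pi.add_apply, h3, smul_add]
      map_smul' := fun c f => by
        apply Lp.ext
        filter_upwards [MemLp.coeFn_toLp ((Lp.memLp (c • f)).smul (r := 2) hg),
          MemLp.coeFn_toLp ((Lp.memLp f).smul (r := 2) hg),
          Lp.coeFn_smul c f,
          Lp.coeFn_smul c (((Lp.memLp f).smul (r := 2) hg).toLp (g • ⇑f))] with x h0 h1 h3 h4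
        simp only [RingHom.id_apply]
        rw [h0, h4, Pi.smul_apply, h1]
        simp only [Pi.smul_apply', Pi.smul_apply, h3]
        exact smul_comm _ _ _ }
  else 0

end Paper
namespace Paper

/-- The orthogonal projection of `L²(𝕋)` onto a closed subspace, as a map `L² → L²`. -/
def projCLM (U : Submodule ℂ L2) (hU : IsClosed (U : Set L2)) : L2 →L[ℂ] L2 :=
  letI : CompleteSpace U := hU.completeSpace_coe
  U.subtypeL.comp U.orthogonalProjectionOnto

/-- The subspace `θH²` of `L²(𝕋)`. -/
def thetaH2 (θ : Tc → ℂ) : Submodule ℂ L2 := H2.map (mulLM θ)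

/-- The model space `K_θ = H² ⊖ θH²`. -/
def Kmod (θ : Tc → ℂ) : Submodule ℂ L2 := H2 ⊓ (thetaH2 θ)ᗮ

lemma isClosed_Kmod (θ : Tc → ℂ) : IsClosed ((Kmod θ : Submodule ℂ L2) : Set L2) :=
  (isClosed_coeffGE 0).inter (thetaH2 θ).isClosed_orthogonal

/-- The orthogonal projection `P_θ : L² → K_θ` (composed with the inclusion back into `L²`). -/
def Ptheta (θ : Tc → ℂ) : L2 →L[ℂ] L2 := projCLM (Kmod θ) (isClosed_Kmod θ)

/-- The orthogonal projection `P₊ : L² → H²`. -/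
def Pplus : L2 →L[ℂ] L2 := projCLM H2 (isClosed_coeffGE 0)

/-- The independent variable `z = e^{it}`, as a function on the circle. -/
def zf : Tc → ℂ := fun x => fourier 1 x

/-- The conjugate variable `z̄ = e^{-it}`. -/
def zbar : Tc → ℂ := fun x => fourier (-1) x

lemma memLp_fourier (n : ℤ) : MemLp (fun x : Tc => (fourier n x : ℂ)) ⊤ μ0 := by
  refine memLp_top_of_bound ((fourier n).continuous.aestronglyMeasurable) 1 ?_
  exact Filter.Eventually.of_forall fun x => le_of_eq (Circle.norm_coe _)

lemma memLp_zf : MemLp zf ⊤ μ0 := memLp_fourier 1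

lemma memLp_zbar : MemLp zbar ⊤ μ0 := memLp_fourier (-1)

/-- The backward shift `S* : f ↦ (f - f(0))/z`, realised on `L²(𝕋)` as
`f ↦ P₊(z̄ f)`; on `H²` this is the usual backward shift. -/
def Sstar : L2 →ₗ[ℂ] L2 := (Pplus : L2 →ₗ[ℂ] L2).comp (mulLM zbar)

/-- `θ` is an inner function: it is essentially bounded, unimodular a.e. on the circle, and
all its negative Fourier coefficients vanish (i.e. it is the boundary function of a bounded
analytic function on the disc). -/
structure IsInner (θ : Tc → ℂ) : Prop where
  memLinf : MemLp θ ⊤ μ0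
  unimodular : ∀ᵐ x ∂μ0, ‖θ x‖ = 1
  analytic : ∀ n : ℤ, n < 0 → fourierCoeff θ n = 0

/-- Pointwise complex conjugation of a function on the circle. -/
def conjFun (f : Tc → ℂ) : Tc → ℂ := fun x => (starRingEnd ℂ) (f x)

lemma memLp_conj {f : Tc → ℂ} {p : ℝ≥0∞} (hf : MemLp f p μ0) : MemLp (conjFun f) p μ0 := by
  refine ⟨continuous_star.comp_aestronglyMeasurable hf.1, ?_⟩
  have h : eLpNorm (conjFun f) p μ0 = eLpNorm f p μ0 :=
    eLpNorm_congr_norm_ae (Filter.Eventually.of_forall fun x => by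
      simp [conjFun])
  rw [h]
  exact hf.2

/-- Complex conjugation on `L²(𝕋)`. -/
def conjL2 (f : L2) : L2 := (memLp_conj (Lp.memLp f)).toLp (conjFun ⇑f)

end Paper
namespace Paper

/-- The set `w·U = {h ∈ L² : h = w·k (a.e.) for some k ∈ U}`, for a fixed function `w` on the
circle and a subspace `U ⊆ L²`; this is a (not necessarily closed) subspace of `L²`. -/
def mulSet (w : Tc → ℂ) (U : Submodule ℂ L2) : Submodule ℂ L2 where
  carrier := {h : L2 | ∃ k ∈ U, (⇑h : Tc → ℂ) =ᵐ[μ0] fun x => w x * (⇑k : Tc → ℂ) x}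
  add_mem' := by
    rintro a b ⟨k₁, hk₁, ha⟩ ⟨k₂, hk₂, hb⟩
    refine ⟨k₁ + k₂, U.add_mem hk₁ hk₂, ?_⟩
    filter_upwards [ha, hb, Lp.coeFn_add a b, Lp.coeFn_add k₁ k₂] with x h1 h2 h3 h4
    simp only [h3, Pi.add_apply, h1, h2, h4, mul_add]
  zero_mem' := by
    refine ⟨0, U.zero_mem, ?_⟩
    filter_upwards [Lp.coeFn_zero ℂ 2 μ0] with x h1
    simp [h1]
  smul_mem' := by
    rintro c a ⟨k, hk, ha⟩
    refine ⟨c • k, U.smul_mem c hk, ?_⟩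
    filter_upwards [ha, Lp.coeFn_smul c a, Lp.coeFn_smul c k] with x h1 h2 h3
    simp only [h2, Pi.smul_apply, h1, h3, smul_eq_mul]
    ring

/-- `f` is an outer function: `f ∈ H²` and the polynomial multiples of `f` are dense in `H²`
(i.e. `f` is cyclic for the forward shift). -/
def IsOuter (f : L2) : Prop :=
  f ∈ H2 ∧
    (Submodule.span ℂ (Set.range fun k : ℕ => ((mulLM zf) ^ k) f)).topologicalClosure = H2

/-- `h` is a cyclic vector for the backward shift `S*` on `H²`. -/
def CyclicSstar (h : L2) : Prop :=
  (Submodule.span ℂ (Set.range fun k : ℕ => (Sstar ^ k) h)).topologicalClosure = H2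

/-- `d` divides `u` in the sense of inner functions. -/
def InnerDvd (d u : Tc → ℂ) : Prop :=
  ∃ v : Tc → ℂ, IsInner v ∧ ∀ᵐ x ∂μ0, u x = d x * v x

/-- Two inner functions have greatest common inner divisor `1`, i.e. every common inner
divisor is a (necessarily unimodular) constant. -/
def CoprimeInner (u₁ u₂ : Tc → ℂ) : Prop :=
  ∀ d : Tc → ℂ, IsInner d → InnerDvd d u₁ → InnerDvd d u₂ → ∃ c : ℂ, ∀ᵐ x ∂μ0, d x = c

/-- The kernel of the truncated Toeplitz operator `A_g^θ = P_θ (g ·) : K_θ → K_θ`: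
`f ∈ ker A_g^θ` iff `f ∈ K_θ` and `g f ⊥ K_θ`. -/
def kerA (θ g : Tc → ℂ) : Submodule ℂ L2 :=
  Kmod θ ⊓ ((Kmod θ)ᗮ).comap (mulLM g)

/-- The kernel of the dual truncated Toeplitz operator `D_g^θ = Q (g ·) : K_θ^⊥ → K_θ^⊥`:
`f ∈ ker D_g^θ` iff `f ∈ K_θ^⊥` and `g f ⊥ K_θ^⊥`. -/
def kerD (θ g : Tc → ℂ) : Submodule ℂ L2 :=
  (Kmod θ)ᗮ ⊓ (((Kmod θ)ᗮ)ᗮ).comap (mulLM g)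

/-- The space `A = {f ∈ ker D_g^θ : gf ∈ K_θ ∩ zH²}`. -/
def dualA (θ g : Tc → ℂ) : Submodule ℂ L2 :=
  kerD θ g ⊓ (Kmod θ ⊓ coeffGE 1).comap (mulLM g)

/-- The space `C = ker D_g^θ ∩ (conj H²₀ ⊕ θzH²) ∩ A`. -/
def dualC (θ g : Tc → ℂ) : Submodule ℂ L2 :=
  kerD θ g ⊓ (coeffLT 0 ⊔ (coeffGE 1).map (mulLM θ)) ⊓ dualA θ g

end Paper
namespace Paper

/-- The vector-valued space `L²(𝕋, ℂⁿ)`, realised as an `ℓ²`-direct sum of `n` copies of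
`L²(𝕋)`; the subspace `H2v n` below is the vector-valued Hardy space `H²(𝔻, ℂⁿ)`. -/
abbrev Vec (n : ℕ) : Type := PiLp 2 (fun _ : Fin n => L2)

/-- The `i`-th component, as a linear map `L²(𝕋, ℂⁿ) → L²(𝕋)`. -/
def compLM {n : ℕ} (i : Fin n) : Vec n →ₗ[ℂ] L2 where
  toFun F := F i
  map_add' F G := rfl
  map_smul' c F := rfl

/-- Vector-valued analogue of `coeffGE`: `coeffGEv n 0 = H²(𝔻, ℂⁿ)` and
`coeffGEv n 1 = zH²(𝔻, ℂⁿ)`. -/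
def coeffGEv (n : ℕ) (k : ℤ) : Submodule ℂ (Vec n) :=
  ⨅ i : Fin n, (coeffGE k).comap (compLM i)

/-- The vector-valued Hardy space `H²(𝔻, ℂⁿ)`. -/
def H2v (n : ℕ) : Submodule ℂ (Vec n) := coeffGEv n 0

/-- The vector-valued model space `K_θ(𝔻, ℂⁿ)` (all components in `K_θ`). -/
def Kv (θ : Tc → ℂ) (n : ℕ) : Submodule ℂ (Vec n) :=
  ⨅ i : Fin n, (Kmod θ).comap (compLM i)

/-- Evaluation at the origin, `F ↦ F(0)`, for (Hardy-space) elements of `L²(𝕋, ℂⁿ)`. -/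
def ev0 {n : ℕ} (F : Vec n) : EuclideanSpace ℂ (Fin n) := WithLp.toLp 2 (fun i => cf (F i) 0)

/-- Evaluation at the origin as a linear map `H²(𝔻, ℂⁿ) → ℂⁿ`. -/
def ev0LM (n : ℕ) : Vec n →ₗ[ℂ] EuclideanSpace ℂ (Fin n) where
  toFun := ev0
  map_add' _F _G := by
    ext i
    simp [ev0, cf]
  map_smul' _c _F := by
    ext i
    simp [ev0, cf]

/-- The componentwise backward shift on `L²(𝕋, ℂⁿ)`. -/
def SstarV {n : ℕ} : Vec n →ₗ[ℂ] Vec n where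
  toFun F := WithLp.toLp 2 (fun i => Sstar (F i))
  map_add' _F _G := by
    ext i
    simp
  map_smul' _c _F := by
    ext i
    simp

/-- Componentwise multiplication by a scalar `L^∞` function on `L²(𝕋, ℂⁿ)`. -/
def mulVLM (g : Tc → ℂ) {n : ℕ} : Vec n →ₗ[ℂ] Vec n where
  toFun F := WithLp.toLp 2 (fun i => mulLM g (F i))
  map_add' _F _G := by
    ext i
    simp
  map_smul' _c _F := by
    ext i
    simp

/-- The projection onto the first `i` coordinates, `P_i : H²(𝔻, ℂⁿ) → H²(𝔻, ℂⁱ)`. -/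
def projLE {n i : ℕ} (h : i ≤ n) : Vec n →ₗ[ℂ] Vec i where
  toFun F := WithLp.toLp 2 (fun j => F (Fin.castLE h j))
  map_add' F G := rfl
  map_smul' c F := rfl

/-- The `i`-th row of a matrix symbol applied to a vector function:
`F ↦ ∑ j, G i j • F j`. -/
def rowLM {n : ℕ} (G : Matrix (Fin n) (Fin n) (Tc → ℂ)) (i : Fin n) : Vec n →ₗ[ℂ] L2 :=
  ∑ j : Fin n, (mulLM (G i j)).comp (compLM j)

/-- The kernel of the block Toeplitz operator `T_G = P₊(G ·)` on `H²(𝔻, ℂⁿ)`: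
`F ∈ ker T_G` iff `F ∈ H²(𝔻, ℂⁿ)` and every component of `GF` is orthogonal to `H²`. -/
def kerT {n : ℕ} (G : Matrix (Fin n) (Fin n) (Tc → ℂ)) : Submodule ℂ (Vec n) :=
  H2v n ⊓ ⨅ i : Fin n, (H2ᗮ).comap (rowLM G i)

/-- The kernel of the matrix truncated Toeplitz operator `A_G^θ = P_θ(G ·)` on `K_θ(𝔻, ℂ²)`. -/
def kerAv (θ : Tc → ℂ) (G : Matrix (Fin 2) (Fin 2) (Tc → ℂ)) : Submodule ℂ (Vec 2) :=
  Kv θ 2 ⊓ ⨅ i : Fin 2, ((Kmod θ)ᗮ).comap (rowLM G i)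

/-- The scalar-type space `w·U ⊆ L²(𝕋, ℂⁿ)`, for a fixed vector function `w` and a
subspace `U ⊆ L²(𝕋)` of scalar functions. -/
def vecMulSet {n : ℕ} (w : Vec n) (U : Submodule ℂ L2) : Submodule ℂ (Vec n) where
  carrier := {F | ∃ k ∈ U, ∀ i : Fin n,
    (⇑(F i) : Tc → ℂ) =ᵐ[μ0] fun x => (⇑(w i) : Tc → ℂ) x * (⇑k : Tc → ℂ) x}
  add_mem' := by
    rintro a b ⟨k₁, hk₁, ha⟩ ⟨k₂, hk₂, hb⟩
    refine ⟨k₁ + k₂, U.add_mem hk₁ hk₂, fun i => ?_⟩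
    have hab : (a + b) i = a i + b i := rfl
    rw [hab]
    filter_upwards [ha i, hb i, Lp.coeFn_add (a i) (b i), Lp.coeFn_add k₁ k₂]
      with x h1 h2 h3 h4
    simp only [h3, Pi.add_apply, h1, h2, h4, mul_add]
  zero_mem' := by
    refine ⟨0, U.zero_mem, fun i => ?_⟩
    have h0 : (0 : Vec n) i = 0 := rfl
    rw [h0]
    filter_upwards [Lp.coeFn_zero ℂ 2 μ0] with x h1
    simp [h1]
  smul_mem' := by
    rintro c a ⟨k, hk, ha⟩
    refine ⟨c • k, U.smul_mem c hk, fun i => ?_⟩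
    have hc : (c • a) i = c • (a i) := rfl
    rw [hc]
    filter_upwards [ha i, Lp.coeFn_smul c (a i), Lp.coeFn_smul c k] with x h1 h2 h3
    simp only [h2, Pi.smul_apply, h1, h3, smul_eq_mul]
    ring

end Paper
namespace Paper

/-- The representation `F = F₀ k₀ + z ∑ⱼ kⱼ eⱼ` of Theorem 3.4(1): here the columns of `F₀`
are `W 0, …, W (r-1)`, the `eⱼ` are an orthonormal basis of the defect space, and the
parameter `k = (k₀, k₁, …, k_m)` runs through a subspace of `H²(𝔻, ℂ^{r+m})`. -/
def rep1 {n r m : ℕ} (W : Fin r → Vec n) (e : Fin m → Vec n) (k : Vec (r + m)) (F : Vec n) :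
    Prop :=
  ∀ i : Fin n,
    (⇑(F i) : Tc → ℂ) =ᵐ[μ0] fun x =>
      (∑ j : Fin r, (⇑(k (Fin.castAdd m j)) : Tc → ℂ) x * (⇑(W j i) : Tc → ℂ) x) +
        zf x * ∑ j : Fin m, (⇑(k (Fin.natAdd r j)) : Tc → ℂ) x * (⇑(e j i) : Tc → ℂ) x

/-- The representation `F = z ∑ⱼ kⱼ eⱼ` of Theorem 3.4(2). -/
def rep2 {n m : ℕ} (e : Fin m → Vec n) (k : Vec m) (F : Vec n) : Prop :=
  ∀ i : Fin n,
    (⇑(F i) : Tc → ℂ) =ᵐ[μ0] fun x =>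
      zf x * ∑ j : Fin m, (⇑(k j) : Tc → ℂ) x * (⇑(e j i) : Tc → ℂ) x

end Paper
namespace Paper

-- ===================== Auxiliary infrastructure =====================

open scoped InnerProductSpace

lemma cf_eq_fourierCoeff (f : L2) (m : ℤ) : cf f m = fourierCoeff (⇑f) m := by
  rw [← fourierBasis_repr]
  rfl

lemma inner_L2_eq (x y : L2) : ⟪x, y⟫_ℂ = ∫ a, conj (x a) * y a ∂μ0 := by
  rw [MeasureTheory.L2.inner_def]
  simp [RCLike.inner_apply]
  refine integral_congr_ae (Filter.Eventually.of_forall fun a => ?_)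
  ring

lemma inner_eq_tsum_cf (x y : L2) : ⟪x, y⟫_ℂ = ∑' m : ℤ, conj (cf x m) * cf y m := by
  rw [← fourierBasis.tsum_inner_mul_inner x y]
  congr 1; funext i
  have h1 : cf x i = fourierBasis.repr x i := rfl
  have h2 : cf y i = fourierBasis.repr y i := rfl
  rw [h1, h2, fourierBasis.repr_apply_apply, fourierBasis.repr_apply_apply,
    ← inner_conj_symm x (fourierBasis i)]

/-- Orthogonality from separated Fourier supports. -/
lemma inner_eq_zero_of_cf (x y : L2) (k : ℤ) (hx : ∀ m, k ≤ m → cf x m = 0)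
    (hy : ∀ m, m < k → cf y m = 0) : ⟪x, y⟫_ℂ = 0 := by
  rw [inner_eq_tsum_cf]
  convert tsum_zero with m
  rcases lt_or_ge m k with h | h
  · rw [hy m h, mul_zero]
  · rw [hx m h, map_zero, zero_mul]

lemma coeFn_mulLM {g : Tc → ℂ} (hg : MemLp g ⊤ μ0) (f : L2) :
    ⇑(mulLM g f) =ᵐ[μ0] fun x => g x * f x := by
  rw [mulLM, dif_pos hg]
  exact (MemLp.coeFn_toLp ((Lp.memLp f).smul (r := 2) hg)).trans
    (Filter.Eventually.of_forall fun x => rfl)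

lemma coeFn_pow_zf (n : ℕ) (f : L2) :
    ⇑((mulLM zf ^ n) f) =ᵐ[μ0] fun x => fourier (n : ℤ) x * f x := by
  induction n generalizing f with
  | zero =>
      simp only [pow_zero, Module.End.one_apply, Nat.cast_zero]
      exact Filter.Eventually.of_forall fun x => by simp [fourier_zero]
  | succ n ih =>
      have h1 : (mulLM zf ^ (n + 1)) f = (mulLM zf ^ n) (mulLM zf f) := by
        rw [pow_succ, Module.End.mul_apply]
      rw [h1]
      filter_upwards [ih (mulLM zf f), coeFn_mulLM memLp_zf f] with x hx1 hx2
      rw [hx1, hx2]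
      have : ((n : ℤ) + 1) = (((n + 1 : ℕ) : ℤ)) := by push_cast; ring
      rw [← this, fourier_add]
      show (fourier (n:ℤ)) x * ((fourier 1) x * f x) = (fourier (n:ℤ)) x * (fourier 1) x * f x
      ring

lemma cf_shift {F f : L2} {j : ℤ} (h : ⇑F =ᵐ[μ0] fun x => fourier j x * f x) (m : ℤ) :
    cf F m = cf f (m - j) := by
  rw [cf_eq_fourierCoeff, cf_eq_fourierCoeff, fourierCoeff, fourierCoeff]
  refine integral_congr_ae ?_
  filter_upwards [h] with x hx
  rw [hx]
  simp only [smul_eq_mul]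
  rw [← mul_assoc, ← fourier_add]
  congr 2
  ring

lemma cf_pow_zf (n : ℕ) (f : L2) (m : ℤ) : cf ((mulLM zf ^ n) f) m = cf f (m - n) :=
  cf_shift (coeFn_pow_zf n f) m

lemma cf_mulLM_zbar (f : L2) (m : ℤ) : cf (mulLM zbar f) m = cf f (m + 1) := by
  have h := cf_shift (j := -1) ((coeFn_mulLM memLp_zbar f).trans
    (Filter.Eventually.of_forall fun x => rfl)) m
  rw [h, sub_neg_eq_add]

lemma cf_conjL2 (f : L2) (m : ℤ) : cf (conjL2 f) m = conj (cf f (-m)) := by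
  rw [cf_eq_fourierCoeff, cf_eq_fourierCoeff, fourierCoeff, fourierCoeff, ← integral_conj]
  refine integral_congr_ae ?_
  have hcf : ⇑(conjL2 f) =ᵐ[μ0] conjFun ⇑f := MemLp.coeFn_toLp _
  filter_upwards [hcf] with x hx
  rw [hx]
  simp only [smul_eq_mul, conjFun, map_mul, neg_neg]
  rw [← fourier_neg]

lemma mem_H2_iff {f : L2} : f ∈ H2 ↔ ∀ m : ℤ, m < 0 → cf f m = 0 := mem_coeffGE

/-- `fourier j` as an element of `L²`. -/
def fLp (j : ℤ) : L2 := fourierLp 2 j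

lemma coeFn_fLp (j : ℤ) : ⇑(fLp j) =ᵐ[μ0] fun x => fourier j x := coeFn_fourierLp 2 j

lemma cf_fLp (j m : ℤ) : cf (fLp j) m = if m = j then 1 else 0 := by
  have h3 : cf (fLp j) m = fourierBasis.repr ((fourierBasis : HilbertBasis ℤ ℂ L2) j) m := by
    rw [coe_fourierBasis]
    rfl
  rw [h3, fourierBasis.repr_self]
  classical
  rw [lp.single_apply]
  exact Pi.single_apply j 1 m

/-- The constant function 1 as an element of L². -/
def oneL2 : L2 := fLp 0

lemma coeFn_oneL2 : ⇑oneL2 =ᵐ[μ0] fun _ => (1 : ℂ) := by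
  refine (coeFn_fLp 0).trans (Filter.Eventually.of_forall fun x => ?_)
  exact fourier_zero

lemma cf_oneL2 (m : ℤ) : cf oneL2 m = if m = 0 then 1 else 0 := cf_fLp 0 m

lemma oneL2_mem_H2 : oneL2 ∈ H2 := by
  rw [mem_H2_iff]
  intro m hm
  rw [cf_oneL2, if_neg (by omega)]

lemma fLp_mem_H2 {j : ℤ} (hj : 0 ≤ j) : fLp j ∈ H2 := by
  rw [mem_H2_iff]
  intro m hm
  rw [cf_fLp, if_neg (by omega)]


lemma cf_congr {x : L2} {h : Tc → ℂ} (hx : ⇑x =ᵐ[μ0] h) (m : ℤ) :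
    cf x m = fourierCoeff h m := by
  rw [cf_eq_fourierCoeff, fourierCoeff, fourierCoeff]
  refine integral_congr_ae ?_
  filter_upwards [hx] with t ht
  rw [ht]

lemma coeFn_conjL2 (f : L2) : ⇑(conjL2 f) =ᵐ[μ0] fun x => conj (f x) :=
  (MemLp.coeFn_toLp _).trans (Filter.Eventually.of_forall fun _ => rfl)

lemma cf_sub (x y : L2) (m : ℤ) : cf (x - y) m = cf x m - cf y m := by
  simp [cf, map_sub]

lemma cf_smul (c : ℂ) (x : L2) (m : ℤ) : cf (c • x) m = c * cf x m := by
  change coeffCLM m (c • x) = _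
  rw [ContinuousLinearMap.map_smul]
  rfl

lemma cf_mulLM_zf (f : L2) (m : ℤ) : cf (mulLM zf f) m = cf f (m - 1) :=
  cf_shift (j := 1) ((coeFn_mulLM memLp_zf f).trans
    (Filter.Eventually.of_forall fun x => rfl)) m

lemma cf_zero_eq_integral (u : L2) : cf u 0 = ∫ t, u t ∂μ0 := by
  rw [cf_eq_fourierCoeff, fourierCoeff]
  refine integral_congr_ae (Filter.Eventually.of_forall fun t => ?_)
  simp [fourier_zero]

lemma conj_mul_self_one {z : ℂ} (h : ‖z‖ = 1) : conj z * z = 1 := by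
  rw [mul_comm, Complex.mul_conj, Complex.normSq_eq_norm_sq, h]
  norm_num

lemma mem_Kmod_iff {θ : Tc → ℂ} {f : L2} :
    f ∈ Kmod θ ↔ f ∈ H2 ∧ ∀ u : L2, u ∈ H2 → ⟪mulLM θ u, f⟫_ℂ = 0 := by
  rw [Kmod, Submodule.mem_inf]
  refine and_congr Iff.rfl ?_
  rw [Submodule.mem_orthogonal]
  constructor
  · intro h u hu
    exact h (mulLM θ u) ⟨u, hu, rfl⟩
  · rintro h w ⟨u, hu, rfl⟩
    exact h u hu

lemma mem_kerA_iff {θ g : Tc → ℂ} {f : L2} :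
    f ∈ kerA θ g ↔ f ∈ Kmod θ ∧ ∀ k : L2, k ∈ Kmod θ → ⟪k, mulLM g f⟫_ℂ = 0 := by
  rw [kerA, Submodule.mem_inf, Submodule.mem_comap, Submodule.mem_orthogonal]

/-- coefficient formula for `θ·zⁿ·conj w`. -/
lemma cf_theta_zn_conj (θ : Tc → ℂ) (hθtop : MemLp θ ⊤ μ0) (n : ℕ) (w : L2) (m : ℤ) :
    cf (mulLM θ ((mulLM zf ^ n) (conjL2 w))) m
      = conj (⟪mulLM θ (fLp ((n : ℤ) - m)), w⟫_ℂ) := by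
  rw [cf_eq_fourierCoeff, fourierCoeff, inner_L2_eq, ← integral_conj]
  refine integral_congr_ae ?_
  have h1 := coeFn_mulLM hθtop ((mulLM zf ^ n) (conjL2 w))
  have h2 := coeFn_pow_zf n (conjL2 w)
  have h3 := coeFn_conjL2 w
  have h4 := coeFn_mulLM hθtop (fLp ((n : ℤ) - m))
  have h5 := coeFn_fLp ((n : ℤ) - m)
  filter_upwards [h1, h2, h3, h4, h5] with x hx1 hx2 hx3 hx4 hx5
  rw [hx1, hx2, hx3, hx4, hx5]
  simp only [smul_eq_mul, map_mul, Complex.conj_conj]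
  have h8 : ((fourier ((n:ℤ) - m)) x : ℂ) = fourier (n:ℤ) x * fourier (-m) x := by
    rw [sub_eq_add_neg, fourier_add]
  rw [h8]
  ring

/-- `⟪θu, θ·zⁿ·conj w⟫ = conj ⟪zⁿ conj u, w⟫` using unimodularity. -/
lemma inner_theta_mul (θ : Tc → ℂ) (hθ : IsInner θ) (n : ℕ) (u w : L2) :
    ⟪mulLM θ u, mulLM θ ((mulLM zf ^ n) (conjL2 w))⟫_ℂ
      = conj (⟪(mulLM zf ^ n) (conjL2 u), w⟫_ℂ) := by
  rw [inner_L2_eq, inner_L2_eq, ← integral_conj]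
  refine integral_congr_ae ?_
  filter_upwards [coeFn_mulLM hθ.memLinf u, coeFn_mulLM hθ.memLinf ((mulLM zf ^ n) (conjL2 w)),
    coeFn_pow_zf n (conjL2 w), coeFn_conjL2 w, coeFn_pow_zf n (conjL2 u), coeFn_conjL2 u,
    hθ.unimodular] with x hx1 hx2 hx3 hx4 hx5 hx6 hxu
  rw [hx1, hx2, hx3, hx4, hx5, hx6]
  simp only [map_mul, Complex.conj_conj]
  have h1 : conj (θ x) * θ x = 1 := conj_mul_self_one hxu
  calc conj (θ x) * conj (u x) * (θ x * ((fourier (n:ℤ)) x * conj (w x)))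
      = (conj (θ x) * θ x) * (conj (u x) * (fourier (n:ℤ)) x * conj (w x)) := by ring
    _ = conj (u x) * (fourier (n:ℤ)) x * conj (w x) := by rw [h1]; ring
    _ = _ := by ring

lemma cf_zn_conj (n : ℕ) (u : L2) (m : ℤ) :
    cf ((mulLM zf ^ n) (conjL2 u)) m = conj (cf u ((n : ℤ) - m)) := by
  rw [cf_pow_zf, cf_conjL2]
  congr 1
  ring_nf

/-- Parseval evaluation of `⟪zⁿ conj u, w⟫` for `u ∈ H²`, `w ∈ zⁿH²`. -/
lemma inner_zn_conj_eval (n : ℕ) (u w : L2) (hu : u ∈ H2)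
    (hw : ∀ m : ℤ, m < (n : ℤ) → cf w m = 0) :
    ⟪(mulLM zf ^ n) (conjL2 u), w⟫_ℂ = cf u 0 * cf w (n : ℤ) := by
  rw [inner_eq_tsum_cf]
  rw [tsum_eq_single (n : ℤ)]
  · rw [cf_zn_conj, Complex.conj_conj, sub_self]
  · intro m hm
    rcases lt_or_ge m (n : ℤ) with h | h
    · rw [hw m h, mul_zero]
    · rw [cf_zn_conj, Complex.conj_conj, mem_H2_iff.mp hu ((n:ℤ) - m) (by omega), zero_mul]


/-- **Core lemma**: if `f ∈ ker A_g^θ` has all coefficients below `n+1` vanishing and some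
`f₀ ∈ ker A_g^θ` has nonvanishing `n`-th coefficient (and vanishing below), then
`z̄·f ∈ ker A_g^θ`. -/
lemma key_lemma (θ g : Tc → ℂ) (hθ : IsInner θ) (hg : MemLp g ⊤ μ0) (n : ℕ)
    (f f₀ : L2) (hf : f ∈ kerA θ g) (hf0 : f₀ ∈ kerA θ g)
    (hfc : ∀ m : ℤ, m < (n : ℤ) + 1 → cf f m = 0)
    (hf0c : ∀ m : ℤ, m < (n : ℤ) → cf f₀ m = 0)
    (hf0n : cf f₀ (n : ℤ) ≠ 0) :
    mulLM zbar f ∈ kerA θ g := by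
  obtain ⟨hfK, hfO⟩ := mem_kerA_iff.mp hf
  obtain ⟨hf0K, hf0O⟩ := mem_kerA_iff.mp hf0
  obtain ⟨hfH, hfT⟩ := mem_Kmod_iff.mp hfK
  obtain ⟨hf0H, hf0T⟩ := mem_Kmod_iff.mp hf0K
  set θ2 : L2 := mulLM θ oneL2 with hθ2def
  have hθ2H : θ2 ∈ H2 := by
    rw [mem_H2_iff]
    intro m hm
    have hc : ⇑θ2 =ᵐ[μ0] θ := by
      filter_upwards [coeFn_mulLM hθ.memLinf oneL2, coeFn_oneL2] with x h1 h2
      rw [h1, h2, mul_one]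
    rw [cf_congr hc]
    exact hθ.analytic m hm
  have hD : ∀ u : L2, ⟪mulLM θ u, θ2⟫_ℂ = conj (cf u 0) := by
    intro u
    rw [inner_L2_eq, cf_zero_eq_integral, ← integral_conj]
    refine integral_congr_ae ?_
    filter_upwards [coeFn_mulLM hθ.memLinf u, coeFn_mulLM hθ.memLinf oneL2, coeFn_oneL2,
      hθ.unimodular] with x h1 h2 h3 hxu
    rw [h1, h2, h3, mul_one, map_mul]
    have hz := conj_mul_self_one hxu
    calc conj (θ x) * conj (u x) * θ x = (conj (θ x) * θ x) * conj (u x) := by ring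
      _ = conj (u x) := by rw [hz]; ring
  have hvH2 : ∀ w : L2, (∀ u : L2, u ∈ H2 → ⟪mulLM θ u, w⟫_ℂ = 0) →
      mulLM θ ((mulLM zf ^ n) (conjL2 w)) ∈ H2 := by
    intro w hw
    rw [mem_H2_iff]
    intro m hm
    rw [cf_theta_zn_conj θ hθ.memLinf n w m, hw _ (fLp_mem_H2 (by omega)), map_zero]
  have hAB : ∀ u w : L2, u ∈ H2 → (∀ m : ℤ, m < (n : ℤ) → cf w m = 0) →
      ⟪mulLM θ u, mulLM θ ((mulLM zf ^ n) (conjL2 w))⟫_ℂ = conj (cf u 0 * cf w (n : ℤ)) := by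
    intro u w hu hw
    rw [inner_theta_mul θ hθ n u w, inner_zn_conj_eval n u w hu hw]
  have hvK : mulLM θ ((mulLM zf ^ n) (conjL2 f)) ∈ Kmod θ := by
    rw [mem_Kmod_iff]
    refine ⟨hvH2 f hfT, fun u hu => ?_⟩
    rw [hAB u f hu (fun m hm => hfc m (by omega)), hfc (n : ℤ) (by omega), mul_zero, map_zero]
  have hyK : mulLM θ ((mulLM zf ^ n) (conjL2 f₀)) - conj (cf f₀ (n : ℤ)) • θ2 ∈ Kmod θ := by
    rw [mem_Kmod_iff]
    constructor
    · exact Submodule.sub_mem _ (hvH2 f₀ hf0T) (Submodule.smul_mem _ _ hθ2H)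
    · intro u hu
      rw [inner_sub_right, inner_smul_right, hAB u f₀ hu hf0c, hD u, map_mul]
      ring
  set a : ℂ := ⟪θ2, mulLM g f⟫_ℂ with ha
  have hJI : ⟪mulLM θ ((mulLM zf ^ n) (conjL2 f₀)), mulLM g f⟫_ℂ
      = ⟪mulLM θ ((mulLM zf ^ n) (conjL2 f)), mulLM g f₀⟫_ℂ := by
    rw [inner_L2_eq, inner_L2_eq]
    refine integral_congr_ae ?_
    filter_upwards [coeFn_mulLM hθ.memLinf ((mulLM zf ^ n) (conjL2 f₀)),
      coeFn_pow_zf n (conjL2 f₀), coeFn_conjL2 f₀,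
      coeFn_mulLM hθ.memLinf ((mulLM zf ^ n) (conjL2 f)),
      coeFn_pow_zf n (conjL2 f), coeFn_conjL2 f,
      coeFn_mulLM hg f, coeFn_mulLM hg f₀] with x h1 h2 h3 h4 h5 h6 h7 h8
    rw [h1, h2, h3, h4, h5, h6, h7, h8]
    simp only [map_mul, Complex.conj_conj]
    ring
  have hI : ⟪mulLM θ ((mulLM zf ^ n) (conjL2 f)), mulLM g f₀⟫_ℂ = 0 := hf0O _ hvK
  have hy0 : ⟪mulLM θ ((mulLM zf ^ n) (conjL2 f₀)) - conj (cf f₀ (n : ℤ)) • θ2,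
      mulLM g f⟫_ℂ = 0 := hfO _ hyK
  have haz : a = 0 := by
    rw [inner_sub_left, inner_smul_left, hJI, hI, ← ha] at hy0
    have h1 : cf f₀ (n : ℤ) * a = 0 := by simpa using hy0
    exact (mul_eq_zero.mp h1).resolve_left hf0n
  rw [mem_kerA_iff]
  constructor
  · rw [mem_Kmod_iff]
    constructor
    · rw [mem_H2_iff]
      intro m hm
      rw [cf_mulLM_zbar]
      exact hfc (m + 1) (by omega)
    · intro u hu
      have e0 : ⟪mulLM θ u, mulLM zbar f⟫_ℂ = ⟪mulLM θ (mulLM zf u), f⟫_ℂ := by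
        rw [inner_L2_eq, inner_L2_eq]
        refine integral_congr_ae ?_
        filter_upwards [coeFn_mulLM hθ.memLinf u, coeFn_mulLM memLp_zbar f,
          coeFn_mulLM hθ.memLinf (mulLM zf u), coeFn_mulLM memLp_zf u] with x h1 h2 h3 h4
        rw [h1, h2, h3, h4]
        simp only [map_mul]
        have hz : (zbar x : ℂ) = conj (zf x) := fourier_neg
        rw [hz]
        ring
      rw [e0]
      refine hfT _ ?_
      rw [mem_H2_iff]
      intro m hm
      rw [cf_mulLM_zf]
      exact mem_H2_iff.mp hu (m - 1) (by omega)
  · intro k hk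
    obtain ⟨hkH, hkT⟩ := mem_Kmod_iff.mp hk
    have e1 : ⟪k, mulLM g (mulLM zbar f)⟫_ℂ = ⟪mulLM zf k, mulLM g f⟫_ℂ := by
      rw [inner_L2_eq, inner_L2_eq]
      refine integral_congr_ae ?_
      filter_upwards [coeFn_mulLM hg (mulLM zbar f), coeFn_mulLM memLp_zbar f,
        coeFn_mulLM memLp_zf k, coeFn_mulLM hg f] with x h1 h2 h3 h4
      rw [h1, h2, h3, h4]
      simp only [map_mul]
      have hz : (zbar x : ℂ) = conj (zf x) := fourier_neg
      rw [hz]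
      ring
    set c : ℂ := ⟪θ2, mulLM zf k⟫_ℂ with hc
    have claim1 : ∀ u : L2, u ∈ H2 → ⟪mulLM θ u, mulLM zf k⟫_ℂ = conj (cf u 0) * c := by
      intro u hu
      set u' : L2 := mulLM zbar (u - cf u 0 • oneL2) with hu'def
      have hu'H : u' ∈ H2 := by
        rw [mem_H2_iff]
        intro m hm
        rw [hu'def, cf_mulLM_zbar, cf_sub, cf_smul, cf_oneL2]
        by_cases h : m + 1 = 0
        · rw [if_pos h, h]
          ring
        · rw [if_neg h, mul_zero, sub_zero]
          exact mem_H2_iff.mp hu (m + 1) (by omega)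
      have hdecomp : u = cf u 0 • oneL2 + mulLM zf u' := by
        apply Lp.ext
        filter_upwards [Lp.coeFn_add (cf u 0 • oneL2) (mulLM zf u'),
          Lp.coeFn_smul (cf u 0) oneL2, coeFn_oneL2, coeFn_mulLM memLp_zf u',
          coeFn_mulLM memLp_zbar (u - cf u 0 • oneL2),
          Lp.coeFn_sub u (cf u 0 • oneL2)] with x h1 h2 h3 h4 h5 h6
        have h2' : (⇑(cf u 0 • oneL2) : Tc → ℂ) x = cf u 0 := by
          rw [h2, Pi.smul_apply, h3, smul_eq_mul, mul_one]
        rw [h1, Pi.add_apply, h2', h4, h5, h6, Pi.sub_apply, h2']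
        have hz1 : (zf x : ℂ) * zbar x = 1 := by
          show (fourier 1 x : ℂ) * fourier (-1) x = 1
          rw [← fourier_add]
          norm_num [fourier_zero]
        linear_combination (-(u x - cf u 0)) * hz1
      have e2 : mulLM θ u = cf u 0 • θ2 + mulLM θ (mulLM zf u') := by
        conv_lhs => rw [hdecomp]
        rw [map_add, LinearMap.map_smul]
      have e3 : ⟪mulLM θ (mulLM zf u'), mulLM zf k⟫_ℂ = ⟪mulLM θ u', k⟫_ℂ := by
        rw [inner_L2_eq, inner_L2_eq]
        refine integral_congr_ae ?_
        filter_upwards [coeFn_mulLM hθ.memLinf (mulLM zf u'), coeFn_mulLM memLp_zf u',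
          coeFn_mulLM memLp_zf k, coeFn_mulLM hθ.memLinf u'] with x h1 h2 h3 h4
        rw [h1, h2, h3, h4]
        simp only [map_mul]
        have hz1 : conj (zf x) * zf x = 1 := by
          refine conj_mul_self_one ?_
          show ‖(fourier 1 x : ℂ)‖ = 1
          simpa using Circle.norm_coe _
        linear_combination (conj (θ x) * conj (u' x) * k x) * hz1
      rw [e2, inner_add_left, inner_smul_left, e3, hkT u' hu'H, add_zero]
    have hy2K : mulLM zf k - c • θ2 ∈ Kmod θ := by
      rw [mem_Kmod_iff]
      constructor
      · refine Submodule.sub_mem _ ?_ (Submodule.smul_mem _ _ hθ2H)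
        rw [mem_H2_iff]
        intro m hm
        rw [cf_mulLM_zf]
        exact mem_H2_iff.mp hkH (m - 1) (by omega)
      · intro u hu
        rw [inner_sub_right, inner_smul_right, claim1 u hu, hD u]
        ring
    have e4 : ⟪mulLM zf k - c • θ2, mulLM g f⟫_ℂ = 0 := hfO _ hy2K
    rw [inner_sub_left, inner_smul_left, ← ha] at e4
    have e5 : ⟪mulLM zf k, mulLM g f⟫_ℂ = conj c * a := sub_eq_zero.mp e4
    rw [e1, e5, haz, mul_zero]


lemma projCLM_apply_of_mem {U : Submodule ℂ L2} (hU : IsClosed (U : Set L2)) {x : L2}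
    (hx : x ∈ U) : projCLM U hU x = x := by
  letI : CompleteSpace U := hU.completeSpace_coe
  have h1 : projCLM U hU x = U.starProjection x := rfl
  rw [h1, Submodule.starProjection_eq_self_iff.mpr hx]

end Paper

namespace Paper

/-- **Theorem 4.2.**  If `n` is the greatest natural number with
`ker A_g^θ ⊆ zⁿH²`, then `ker A_g^θ / zⁿ` is a nearly `S*`-invariant subspace of `H²`. -/
theorem kernel_divided_by_power_of_z_nearly_invariant
    (θ g : Tc → ℂ) (hθ : IsInner θ) (hg : MemLp g ⊤ μ0)
    (hker : kerA θ g ≠ ⊥)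
    (n : ℕ)
    (hle : kerA θ g ≤ coeffGE (n : ℤ))
    (hgreatest : ¬ kerA θ g ≤ coeffGE ((n : ℤ) + 1)) :
    (kerA θ g).comap ((mulLM zf) ^ n) ≤ H2 ∧
      ∀ h ∈ (kerA θ g).comap ((mulLM zf) ^ n), cf h 0 = 0 →
        Sstar h ∈ (kerA θ g).comap ((mulLM zf) ^ n) := by
  obtain ⟨f₀, hf₀ker, hf₀n⟩ : ∃ f₀ ∈ kerA θ g, cf f₀ (n : ℤ) ≠ 0 := by
    obtain ⟨f₀, hmem, hnot⟩ := SetLike.not_le_iff_exists.mp hgreatest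
    refine ⟨f₀, hmem, fun h0 => hnot ?_⟩
    rw [mem_coeffGE]
    intro m hm
    by_cases h' : m < (n : ℤ)
    · exact mem_coeffGE.mp (hle hmem) m h'
    · have hmn : m = (n : ℤ) := by omega
      rw [hmn]
      exact h0
  have hpart1 : (kerA θ g).comap ((mulLM zf) ^ n) ≤ H2 := by
    intro h hh
    rw [Submodule.mem_comap] at hh
    have hco := mem_coeffGE.mp (hle hh)
    rw [mem_H2_iff]
    intro m hm
    have h2 := hco (m + n) (by omega)
    rwa [cf_pow_zf, add_sub_cancel_right] at h2
  refine ⟨hpart1, ?_⟩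
  intro h hh hc0
  have hhH2 : h ∈ H2 := hpart1 hh
  rw [Submodule.mem_comap] at hh ⊢
  have hzbarh : mulLM zbar h ∈ H2 := by
    rw [mem_H2_iff]
    intro m hm
    rw [cf_mulLM_zbar]
    by_cases h' : m + 1 = 0
    · rw [h']
      exact hc0
    · exact mem_H2_iff.mp hhH2 (m + 1) (by omega)
  have hSstar : Sstar h = mulLM zbar h := by
    have h1 : Sstar h = Pplus (mulLM zbar h) := rfl
    rw [h1]
    exact projCLM_apply_of_mem _ hzbarh
  rw [hSstar]
  have hcomm : (mulLM zf ^ n) (mulLM zbar h) = mulLM zbar ((mulLM zf ^ n) h) := by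
    apply Lp.ext
    filter_upwards [coeFn_pow_zf n (mulLM zbar h), coeFn_mulLM memLp_zbar h,
      coeFn_mulLM memLp_zbar ((mulLM zf ^ n) h), coeFn_pow_zf n h] with x h1 h2 h3 h4
    rw [h1, h2, h3, h4]
    ring
  rw [hcomm]
  refine key_lemma θ g hθ hg n _ f₀ hh hf₀ker ?_ ?_ hf₀n
  · intro m hm
    by_cases h' : m < (n : ℤ)
    · exact mem_coeffGE.mp (hle hh) m h'
    · have hmn : m = (n : ℤ) := by omega
      rw [hmn, cf_pow_zf, sub_self]
      exact hc0
  · exact fun m hm => mem_coeffGE.mp (hle hf₀ker) m hm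

end Paper
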